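/- Let p ≥ 1 and m ≥ 1 be integers and define the polynomial P(z) := ∏_{j=1}^{m} ∏_{k=0}^{p−1} (z − e^{2πik/p}/j). Then for every 1 ≤ j ≤ m and 0 ≤ ℓ ≤ p−1, the derivative of P satisfies P'(e^{2πiℓ/p}/j) = e^{−2πiℓ/p} · P'(1/j), and moreover P'(e^{2πiℓ/p}/j) ≠ 0. -/

import Mathlib

open Finset Polynomial

lemma key_prod (p : ℕ) (hp : 1 ≤ p) (c z : ℂ) :
    ∏ k ∈ Finset.range p, (z - Complex.exp (2 * Real.pi * Complex.I * k / p) * c)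
      = z ^ p - c ^ p := by
  have hp0 : (p : ℕ) ≠ 0 := by omega
  set ζ : ℂ := Complex.exp (2 * Real.pi * Complex.I / p) with hζdef
  have hζ : IsPrimitiveRoot ζ p := Complex.isPrimitiveRoot_exp p hp0
  have hk : ∀ k : ℕ, Complex.exp (2 * Real.pi * Complex.I * k / p) = ζ ^ k := by
    intro k
    rw [hζdef, ← Complex.exp_nat_mul]
    congr 1
    ring
  have hroots : Polynomial.nthRoots p ((c : ℂ) ^ p)
      = (Multiset.range p).map (fun k => ζ ^ k * c) := hζ.nthRoots_eq rfl
  have hmonic : (X ^ p - C (c ^ p) : ℂ[X]).Monic := monic_X_pow_sub_C _ hp0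
  have hrootsdef : (X ^ p - C (c ^ p) : ℂ[X]).roots = Polynomial.nthRoots p (c ^ p) := rfl
  have hcard : Multiset.card (X ^ p - C (c ^ p) : ℂ[X]).roots
      = (X ^ p - C (c ^ p) : ℂ[X]).natDegree := by
    rw [hrootsdef, hroots, natDegree_X_pow_sub_C]
    simp
  have hprod := prod_multiset_X_sub_C_of_monic_of_roots_card_eq hmonic hcard
  have := congrArg (Polynomial.eval z) hprod
  rw [Polynomial.eval_multiset_prod, hrootsdef, hroots, Multiset.map_map] at this
  simp only [Function.comp, eval_sub, eval_pow, eval_X, eval_C] at this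
  rw [← this]
  simp only [Finset.prod_eq_multiset_prod, Finset.range_val]
  rw [Multiset.map_map]
  refine congrArg Multiset.prod (Multiset.map_congr rfl fun k _ => ?_)
  rw [hk k]; rfl

/-- The polynomial `P(z) = ∏_{j=1}^{m} ∏_{k=0}^{p-1} (z - e^{2πik/p}/j)`. -/
noncomputable def P (p m : ℕ) (z : ℂ) : ℂ :=
  ∏ j ∈ Finset.Icc 1 m, ∏ k ∈ Finset.range p,
    (z - Complex.exp (2 * Real.pi * Complex.I * k / p) / (j : ℂ))

noncomputable def Qp (p m : ℕ) : Polynomial ℂ :=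
  ∏ j ∈ Finset.Icc 1 m, (X ^ p - C ((1 / (j : ℂ)) ^ p))

lemma P_eq (p m : ℕ) (hp : 1 ≤ p) : P p m = fun z => (Qp p m).eval z := by
  funext z
  simp only [P, Qp, Polynomial.eval_prod, Polynomial.eval_sub, Polynomial.eval_pow,
    eval_X, eval_C]
  refine Finset.prod_congr rfl fun j _ => ?_
  rw [← key_prod p hp (1 / (j : ℂ)) z]
  refine Finset.prod_congr rfl fun k _ => ?_
  rw [mul_one_div]

lemma derivative_finset_prod (s : Finset ℕ) (f : ℕ → Polynomial ℂ) :
    Polynomial.derivative (∏ b ∈ s, f b)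
      = ∑ b ∈ s, (∏ a ∈ s.erase b, f a) * Polynomial.derivative (f b) := by
  classical
  induction s using Finset.induction_on with
  | empty => simp
  | @insert x s hx ih =>
    rw [Finset.prod_insert hx, derivative_mul, ih, Finset.sum_insert hx,
      Finset.erase_insert hx, Finset.mul_sum]
    congr 1
    · ring
    · refine Finset.sum_congr rfl fun b hb => ?_
      rw [Finset.erase_insert_of_ne (by rintro rfl; exact hx hb),
        Finset.prod_insert (fun h => hx (Finset.mem_of_mem_erase h))]
      ring

lemma deriv_P (p m j : ℕ) (hp : 1 ≤ p) (hj : j ∈ Finset.Icc 1 m) (z0 : ℂ)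
    (hz : z0 ^ p = (1 / (j : ℂ)) ^ p) :
    deriv (P p m) z0 = (p : ℂ) * z0 ^ (p - 1) *
      ∏ i ∈ (Finset.Icc 1 m).erase j, ((1 / (j : ℂ)) ^ p - (1 / (i : ℂ)) ^ p) := by
  rw [P_eq p m hp]
  rw [Polynomial.deriv, Qp, derivative_finset_prod, Polynomial.eval_finset_sum]
  rw [Finset.sum_eq_single j]
  · simp only [Polynomial.eval_mul, Polynomial.eval_prod, Polynomial.eval_sub,
      Polynomial.eval_pow, eval_X, eval_C, derivative_sub, derivative_X_pow, derivative_C,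
      sub_zero, Polynomial.eval_mul, Polynomial.eval_natCast, hz]
    ring
  · intro b hb hbj
    rw [Polynomial.eval_mul, Polynomial.eval_prod,
      Finset.prod_eq_zero (Finset.mem_erase.mpr ⟨Ne.symm hbj, hj⟩)]
    · ring
    · simp [hz]
  · intro h; exact absurd hj h

/-- For `P(z) = ∏_{j=1}^{m} ∏_{k=0}^{p-1} (z - e^{2πik/p}/j)`, for every `1 ≤ j ≤ m` and
`0 ≤ ℓ ≤ p-1` one has `P'(e^{2πiℓ/p}/j) = e^{-2πiℓ/p} · P'(1/j)` and
`P'(e^{2πiℓ/p}/j) ≠ 0`. -/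
theorem P_deriv_symmetry (p m : ℕ) (hp : 1 ≤ p) (hm : 1 ≤ m) :
    ∀ j : ℕ, 1 ≤ j → j ≤ m → ∀ ℓ : ℕ, ℓ < p →
      deriv (P p m) (Complex.exp (2 * Real.pi * Complex.I * ℓ / p) / (j : ℂ)) =
        Complex.exp (-(2 * Real.pi * Complex.I * ℓ / p)) * deriv (P p m) (1 / (j : ℂ)) ∧
      deriv (P p m) (Complex.exp (2 * Real.pi * Complex.I * ℓ / p) / (j : ℂ)) ≠ 0 := by
  intro j hj1 hjm ℓ hℓ
  set θ : ℂ := 2 * Real.pi * Complex.I * ℓ / p with hθ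
  have hjC : (j : ℂ) ≠ 0 := Nat.cast_ne_zero.mpr (by omega)
  have hpC : (p : ℂ) ≠ 0 := Nat.cast_ne_zero.mpr (by omega)
  have hexp : Complex.exp θ ^ p = 1 := by
    rw [← Complex.exp_nat_mul, hθ, show (p : ℂ) * (2 * Real.pi * Complex.I * ℓ / p)
      = (ℓ : ℂ) * (2 * Real.pi * Complex.I) by field_simp]
    exact Complex.exp_nat_mul_two_pi_mul_I ℓ
  have hz : (Complex.exp θ / (j : ℂ)) ^ p = (1 / (j : ℂ)) ^ p := by
    rw [div_pow, hexp, div_pow, one_pow]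
  have hjmem : j ∈ Finset.Icc 1 m := Finset.mem_Icc.mpr ⟨hj1, hjm⟩
  rw [deriv_P p m j hp hjmem _ hz, deriv_P p m j hp hjmem (1 / (j : ℂ)) rfl]
  have hpow : (Complex.exp θ / (j : ℂ)) ^ (p - 1)
      = Complex.exp (-θ) * (1 / (j : ℂ)) ^ (p - 1) := by
    rw [div_pow, div_pow, one_pow, ← Complex.exp_nat_mul]
    have h1 : ((p - 1 : ℕ) : ℂ) * θ = -θ + (p : ℂ) * θ := by
      rw [Nat.cast_sub hp]; push_cast; ring
    rw [h1, Complex.exp_add,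
      show Complex.exp ((p : ℂ) * θ) = 1 by rw [Complex.exp_nat_mul]; exact hexp,
      mul_one, mul_one_div]
  constructor
  · rw [hpow]; ring
  · have hPr : ∏ i ∈ (Finset.Icc 1 m).erase j, ((1 / (j : ℂ)) ^ p - (1 / (i : ℂ)) ^ p) ≠ 0 := by
      rw [Finset.prod_ne_zero_iff]
      intro i hi
      have hij : i ≠ j := (Finset.mem_erase.mp hi).1
      have hi1 : 1 ≤ i := (Finset.mem_Icc.mp (Finset.mem_erase.mp hi).2).1
      have hiC : (i : ℂ) ≠ 0 := Nat.cast_ne_zero.mpr (by omega)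
      intro hEq
      rw [sub_eq_zero, one_div, one_div, inv_pow, inv_pow, inv_inj] at hEq
      have : ((j ^ p : ℕ) : ℂ) = ((i ^ p : ℕ) : ℂ) := by push_cast; exact hEq
      have hnat : j ^ p = i ^ p := Nat.cast_injective this
      exact hij (Nat.pow_left_injective (by omega) hnat.symm)
    exact mul_ne_zero (mul_ne_zero hpC
      (pow_ne_zero _ (div_ne_zero (Complex.exp_ne_zero _) hjC))) hPr
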